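/- For every integer n ≥ 2 and every ε ∈ (0,1) there exist δ > 0 and c > 0 (depending only on n and ε) with the following property: for every k ≤ n, if f₁, …, f_{k+1} are DER data on the unit sphere S^{n−1} ⊆ ℝⁿ with ⟨f₁, f_i⟩ < −ε for all 2 ≤ i ≤ k+1 and ⟨f_i, f_j⟩ < δ for all 2 ≤ i ≠ j ≤ k+1, then there exists ξ ∈ S^{n−1} such that f₂(ξ) > c and f_i(ξ) = 0 for all 3 ≤ i ≤ k+1. -/

import Mathlib

open scoped InnerProductSpace

noncomputable section

/-- DER data on the unit sphere of `EuclideanSpace ℝ (Fin n)`: a finite family of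
nonempty compact subsets of the sphere together with nonnegative weights summing to at most 1. -/
structure DERData (n : ℕ) where
  m : ℕ
  w : Fin m → ℝ
  A : Fin m → Set (EuclideanSpace ℝ (Fin n))
  nonempty' : ∀ α, (A α).Nonempty
  compact' : ∀ α, IsCompact (A α)
  subset_sphere : ∀ α, A α ⊆ Metric.sphere (0 : EuclideanSpace ℝ (Fin n)) 1
  nonneg : ∀ α, 0 ≤ w α
  sum_le_one : ∑ α, w α ≤ 1

/-- The DER function of DER data: `f(x) = -∑ a_α cos d(A_α, x) = -∑ a_α sup_{a ∈ A_α} ⟪a, x⟫`. -/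
def DERData.toFun {n : ℕ} (f : DERData n) (x : EuclideanSpace ℝ (Fin n)) : ℝ :=
  -∑ α, f.w α * sSup ((fun a => ⟪a, x⟫_ℝ) '' f.A α)

/-- The scalar product of two DER data:
`⟨f,g⟩ = ∑_{α,β} a_α b_β cos d(A_α, B_β) = ∑_{α,β} a_α b_β sup_{a ∈ A_α, b ∈ B_β} ⟪a, b⟫`. -/
def DERData.sprod {n : ℕ} (f g : DERData n) : ℝ :=
  ∑ α, ∑ β, f.w α * g.w β * sSup (Set.image2 (fun a b => ⟪a, b⟫_ℝ) (f.A α) (g.A β))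


namespace DERAux

variable {n : ℕ}

def selSet (g : DERData n) : Set (EuclideanSpace ℝ (Fin n)) :=
  (fun b : Fin g.m → EuclideanSpace ℝ (Fin n) => ∑ β, g.w β • b β) ''
    (Set.pi Set.univ fun β => g.A β)

lemma selSet_nonempty (g : DERData n) : (selSet g).Nonempty := by
  refine ⟨_, ⟨fun β => (g.nonempty' β).some, ?_, rfl⟩⟩
  rw [Set.mem_univ_pi]
  exact fun β => (g.nonempty' β).some_mem

lemma norm_of_memA (g : DERData n) {β : Fin g.m} {x : EuclideanSpace ℝ (Fin n)}
    (hx : x ∈ g.A β) : ‖x‖ = 1 := by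
  have := g.subset_sphere β hx
  rwa [mem_sphere_zero_iff_norm] at this

lemma selSet_norm_le (g : DERData n) {x : EuclideanSpace ℝ (Fin n)} (hx : x ∈ selSet g) :
    ‖x‖ ≤ 1 := by
  obtain ⟨b, hb, rfl⟩ := hx
  rw [Set.mem_univ_pi] at hb
  calc ‖∑ β, g.w β • b β‖ ≤ ∑ β, ‖g.w β • b β‖ := norm_sum_le _ _
  _ = ∑ β, g.w β := by
      refine Finset.sum_congr rfl fun β _ => ?_
      rw [norm_smul, norm_of_memA g (hb β), mul_one, Real.norm_eq_abs,
        abs_of_nonneg (g.nonneg β)]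
  _ ≤ 1 := g.sum_le_one

lemma selSet_isCompact (g : DERData n) : IsCompact (selSet g) := by
  refine (isCompact_univ_pi fun β => g.compact' β).image ?_
  exact continuous_finset_sum _ fun β _ => continuous_const.fun_smul (continuous_apply β)

lemma bddAbove_inner_image2 (g h : DERData n) (α : Fin g.m) (β : Fin h.m) :
    BddAbove (Set.image2 (fun a b => ⟪a, b⟫_ℝ) (g.A α) (h.A β)) := by
  refine ⟨1, ?_⟩
  rintro _ ⟨a, ha, b, hb, rfl⟩
  calc ⟪a, b⟫_ℝ ≤ ‖a‖ * ‖b‖ := real_inner_le_norm a b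
  _ = 1 := by rw [norm_of_memA g ha, norm_of_memA h hb, one_mul]

lemma inner_le_sprod {g h : DERData n} {x y : EuclideanSpace ℝ (Fin n)}
    (hx : x ∈ selSet g) (hy : y ∈ selSet h) : ⟪x, y⟫_ℝ ≤ g.sprod h := by
  obtain ⟨b, hb, rfl⟩ := hx
  obtain ⟨c, hc, rfl⟩ := hy
  rw [Set.mem_univ_pi] at hb hc
  rw [sum_inner]
  unfold DERData.sprod
  refine Finset.sum_le_sum fun α _ => ?_
  rw [inner_sum]
  refine Finset.sum_le_sum fun β _ => ?_
  rw [real_inner_smul_left, real_inner_smul_right, ← mul_assoc]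
  have hmem : ⟪b α, c β⟫_ℝ ∈ Set.image2 (fun a b => ⟪a, b⟫_ℝ) (g.A α) (h.A β) :=
    Set.mem_image2_of_mem (hb α) (hc β)
  exact mul_le_mul_of_nonneg_left (le_csSup (bddAbove_inner_image2 g h α β) hmem)
    (mul_nonneg (g.nonneg α) (h.nonneg β))

lemma toFun_max (g : DERData n) (ξ : EuclideanSpace ℝ (Fin n)) :
    ∃ v ∈ selSet g, -g.toFun ξ = ⟪v, ξ⟫_ℝ ∧ ∀ v' ∈ selSet g, ⟪v', ξ⟫_ℝ ≤ ⟪v, ξ⟫_ℝ := by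
  have hcont : ∀ β : Fin g.m, ContinuousOn (fun a => ⟪a, ξ⟫_ℝ) (g.A β) := fun β =>
    (continuous_id.inner continuous_const).continuousOn
  choose mfun hmem hmax using fun β : Fin g.m =>
    (g.compact' β).exists_isMaxOn (g.nonempty' β) (hcont β)
  have hmax' : ∀ (β : Fin g.m), ∀ a ∈ g.A β, ⟪a, ξ⟫_ℝ ≤ ⟪mfun β, ξ⟫_ℝ :=
    fun β a ha => hmax β ha
  refine ⟨∑ β, g.w β • mfun β, ⟨mfun, by rw [Set.mem_univ_pi]; exact hmem, rfl⟩, ?_, ?_⟩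
  · unfold DERData.toFun
    rw [neg_neg, sum_inner]
    refine Finset.sum_congr rfl fun β _ => ?_
    rw [real_inner_smul_left]
    congr 1
    refine le_antisymm (csSup_le ((g.nonempty' β).image _) ?_)
      (le_csSup ⟨⟪mfun β, ξ⟫_ℝ, ?_⟩ (Set.mem_image_of_mem _ (hmem β)))
    · rintro _ ⟨a, ha, rfl⟩; exact hmax' β a ha
    · rintro _ ⟨a, ha, rfl⟩; exact hmax' β a ha
  · rintro _ ⟨c, hc, rfl⟩
    rw [Set.mem_univ_pi] at hc
    rw [sum_inner, sum_inner]
    refine Finset.sum_le_sum fun β _ => ?_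
    rw [real_inner_smul_left, real_inner_smul_left]
    exact mul_le_mul_of_nonneg_left (hmax' β (c β) (hc β)) (g.nonneg β)



/-- Core variational lemma. -/
lemma core (M : ℝ) (hM : 1 ≤ M) {ι : Type} [Fintype ι]
    (U : ι → Set (EuclideanSpace ℝ (Fin n))) (U₀ : Set (EuclideanSpace ℝ (Fin n)))
    (hne : ∀ i, (U i).Nonempty) (hcp : ∀ i, IsCompact (U i)) (hne0 : U₀.Nonempty)
    (hnrm : ∀ i, ∀ u ∈ U i, ‖u‖ ≤ M) (hnrm0 : ∀ u ∈ U₀, ‖u‖ ≤ M)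
    (hcross : ∀ i j, i ≠ j → ∀ u ∈ U i, ∀ u' ∈ U j, ⟪u, u'⟫_ℝ ≤ -(1/2))
    (hcross0 : ∀ i, ∀ u ∈ U i, ∀ u' ∈ U₀, ⟪u, u'⟫_ℝ ≤ -(1/2)) :
    ∃ η : EuclideanSpace ℝ (Fin n), ‖η‖ ≤ 4*M ∧
      (∀ i, ∀ u ∈ U i, ⟪u, η⟫_ℝ ≤ 1) ∧ (∀ i, ∃ u ∈ U i, ⟪u, η⟫_ℝ = 1) ∧
      ∀ u ∈ U₀, ⟪u, η⟫_ℝ ≤ 1/2 := by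
  classical
  obtain ⟨u₀, hu₀⟩ := hne0
  have hM0 : (0:ℝ) < M := lt_of_lt_of_le one_pos hM
  obtain ⟨Ω, hΩdef⟩ : ∃ S : Set (EuclideanSpace ℝ (Fin n)),
      S = {x | (∀ i, ∀ u ∈ U i, ⟪u, x⟫_ℝ ≤ 1) ∧ ∀ u ∈ U₀, ⟪u, x⟫_ℝ ≤ 1/2} := ⟨_, rfl⟩
  have hmemΩ : ∀ x, x ∈ Ω ↔
      ((∀ i, ∀ u ∈ U i, ⟪u, x⟫_ℝ ≤ 1) ∧ ∀ u ∈ U₀, ⟪u, x⟫_ℝ ≤ 1/2) := by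
    intro x; rw [hΩdef]; exact Iff.rfl
  have hΩclosed : IsClosed Ω := by
    have hrw : Ω = (⋂ i, ⋂ u ∈ U i, {x | ⟪u, x⟫_ℝ ≤ 1}) ∩
        ⋂ u ∈ U₀, {x | ⟪u, x⟫_ℝ ≤ 1/2} := by
      ext x
      simp only [hmemΩ x, Set.mem_inter_iff, Set.mem_iInter, Set.mem_setOf_eq]
    rw [hrw]
    exact (isClosed_iInter fun i => isClosed_iInter fun u => isClosed_iInter fun _ =>
        isClosed_le (continuous_const.inner continuous_id) continuous_const).inter
      (isClosed_iInter fun u => isClosed_iInter fun _ =>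
        isClosed_le (continuous_const.inner continuous_id) continuous_const)
  obtain ⟨Ψ, hΨdef⟩ : ∃ F : EuclideanSpace ℝ (Fin n) → ℝ,
      F = fun x => -⟪u₀, x⟫_ℝ - ‖x‖^2/4 := ⟨_, rfl⟩
  have hΨapp : ∀ x, Ψ x = -⟪u₀, x⟫_ℝ - ‖x‖^2/4 := fun x => by rw [hΨdef]
  have hΨcont : Continuous Ψ := by
    rw [hΨdef]
    exact ((continuous_const.inner continuous_id).neg).sub
      ((continuous_norm.pow 2).div_const 4)
  have h0Ω : (0 : EuclideanSpace ℝ (Fin n)) ∈ Ω := by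
    rw [hmemΩ]
    constructor
    · intro i u hu; rw [inner_zero_right]; norm_num
    · intro u hu; rw [inner_zero_right]; norm_num
  have h0K : (0 : EuclideanSpace ℝ (Fin n)) ∈ Ω ∩ Metric.closedBall 0 (4*M+1) := by
    refine ⟨h0Ω, ?_⟩
    rw [Metric.mem_closedBall, dist_self]
    nlinarith
  have hKcompact : IsCompact (Ω ∩ Metric.closedBall 0 (4*M+1)) :=
    (isCompact_closedBall _ _).inter_left hΩclosed
  obtain ⟨η, hηK, hηmax⟩ := hKcompact.exists_isMaxOn ⟨0, h0K⟩ hΨcont.continuousOn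
  have hηΩ := (hmemΩ η).mp hηK.1
  have hΨ0 : (0:ℝ) ≤ Ψ η := by
    have h : Ψ 0 ≤ Ψ η := hηmax h0K
    have hz : Ψ 0 = 0 := by rw [hΨapp, inner_zero_right, norm_zero]; norm_num
    rw [hz] at h; exact h
  have hηnorm : ‖η‖ ≤ 4*M := by
    have h1 : -⟪u₀, η⟫_ℝ ≤ M * ‖η‖ := by
      have h2 := abs_real_inner_le_norm u₀ η
      have h3 := hnrm0 u₀ hu₀
      nlinarith [neg_le_abs ⟪u₀, η⟫_ℝ, norm_nonneg η]
    have h2 : ‖η‖^2/4 ≤ -⟪u₀, η⟫_ℝ := by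
      rw [hΨapp] at hΨ0; linarith
    nlinarith [norm_nonneg η]
  have hact : ∀ j, ∃ u ∈ U j, ⟪u, η⟫_ℝ = 1 := by
    intro j
    obtain ⟨e, heU, hemax⟩ := (hcp j).exists_isMaxOn (hne j)
      ((continuous_id.inner continuous_const).continuousOn :
        ContinuousOn (fun u => ⟪u, η⟫_ℝ) (U j))
    by_cases hteq : ⟪e, η⟫_ℝ = 1
    · exact ⟨e, heU, hteq⟩
    exfalso
    have ht1 : ⟪e, η⟫_ℝ ≤ 1 := hηΩ.1 j e heU
    have htlt : ⟪e, η⟫_ℝ < 1 := lt_of_le_of_ne ht1 hteq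
    obtain ⟨t, htdef⟩ : ∃ t : ℝ, t = ⟪e, η⟫_ℝ := ⟨_, rfl⟩
    have h1t : 0 < 1 - t := by rw [htdef]; linarith
    obtain ⟨s, hsdef⟩ : ∃ s : ℝ, s = min ((1-t)/M^2) (1/M) := ⟨_, rfl⟩
    have hs0 : 0 < s := by
      rw [hsdef]; exact lt_min (by positivity) (by positivity)
    have hsM2 : s * M^2 ≤ 1 - t := by
      have h := min_le_left ((1-t)/M^2) (1/M)
      rw [← hsdef] at h
      calc s * M^2 ≤ ((1-t)/M^2) * M^2 := mul_le_mul_of_nonneg_right h (by positivity)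
      _ = 1 - t := by field_simp
    have hsM : s * M ≤ 1 := by
      have h := min_le_right ((1-t)/M^2) (1/M)
      rw [← hsdef] at h
      calc s * M ≤ (1/M) * M := mul_le_mul_of_nonneg_right h hM0.le
      _ = 1 := by field_simp
    have henorm : ‖e‖ ≤ M := hnrm j e heU
    have hη'Ω : η + s • e ∈ Ω := by
      rw [hmemΩ]
      constructor
      · intro i u hu
        rw [inner_add_right, real_inner_smul_right]
        by_cases hij : i = j
        · subst hij
          have h1 : ⟪u, η⟫_ℝ ≤ t := by rw [htdef]; exact hemax hu
          have h2 : ⟪u, e⟫_ℝ ≤ M^2 := by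
            have h4 := real_inner_le_norm u e
            have h5 := hnrm i u hu
            nlinarith [norm_nonneg e, norm_nonneg u]
          nlinarith [mul_le_mul_of_nonneg_left h2 hs0.le]
        · have h1 : ⟪u, η⟫_ℝ ≤ 1 := hηΩ.1 i u hu
          have h2 : ⟪u, e⟫_ℝ ≤ -(1/2) := hcross i j hij u hu e heU
          nlinarith
      · intro u hu
        rw [inner_add_right, real_inner_smul_right]
        have h1 : ⟪u, η⟫_ℝ ≤ 1/2 := hηΩ.2 u hu
        have h2 : ⟪u, e⟫_ℝ ≤ -(1/2) := by
          have h3 := hcross0 j e heU u hu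
          rwa [real_inner_comm] at h3
        nlinarith
    have hη'K : η + s • e ∈ Ω ∩ Metric.closedBall 0 (4*M+1) := by
      refine ⟨hη'Ω, ?_⟩
      rw [Metric.mem_closedBall, dist_zero_right]
      have h1 : ‖η + s • e‖ ≤ ‖η‖ + s * ‖e‖ := by
        calc ‖η + s • e‖ ≤ ‖η‖ + ‖s • e‖ := norm_add_le _ _
        _ = ‖η‖ + s * ‖e‖ := by rw [norm_smul, Real.norm_eq_abs, abs_of_pos hs0]
      have h2 : s * ‖e‖ ≤ 1 := by
        calc s * ‖e‖ ≤ s * M := mul_le_mul_of_nonneg_left henorm hs0.le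
        _ ≤ 1 := hsM
      linarith
    have hcontr : Ψ (η + s • e) ≤ Ψ η := hηmax hη'K
    have hu₀e : ⟪u₀, e⟫_ℝ ≤ -(1/2) := by
      have h3 := hcross0 j e heU u₀ hu₀
      rwa [real_inner_comm] at h3
    have hee : ‖e‖^2 ≤ M^2 := by nlinarith [norm_nonneg e]
    have hηe : ⟪η, e⟫_ℝ = t := by rw [htdef, real_inner_comm]
    have hexp : Ψ (η + s • e) = -⟪u₀, η⟫_ℝ - s * ⟪u₀, e⟫_ℝ
        - (‖η‖^2 + 2*(s*t) + s^2*‖e‖^2)/4 := by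
      rw [hΨapp, inner_add_right, real_inner_smul_right, norm_add_sq_real,
        real_inner_smul_right, norm_smul, Real.norm_eq_abs, abs_of_pos hs0, hηe]
      ring
    have hdiff : Ψ (η + s • e) - Ψ η = -(s * ⟪u₀, e⟫_ℝ) - (2*(s*t) + s^2*‖e‖^2)/4 := by
      rw [hexp, hΨapp]; ring
    have hse2 : s^2 * ‖e‖^2 ≤ s * (1-t) := by
      calc s^2 * ‖e‖^2 ≤ s^2 * M^2 := mul_le_mul_of_nonneg_left hee (sq_nonneg s)
      _ = s * (s * M^2) := by ring
      _ ≤ s * (1-t) := mul_le_mul_of_nonneg_left hsM2 hs0.le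
    have hkey : 0 < Ψ (η + s • e) - Ψ η := by
      rw [hdiff]
      have h1 : s * (1/2) ≤ -(s * ⟪u₀, e⟫_ℝ) := by nlinarith
      nlinarith
    linarith
  exact ⟨η, hηnorm, hηΩ.1, hact, hηΩ.2⟩


end DERAux

set_option maxHeartbeats 1600000 in
/-- Lemma 5.2(3) (round-sphere case). Here `f 0, f 1, …, f k` play the roles of
`f₁, f₂, …, f_{k+1}`. -/
theorem stmt_3 (n : ℕ) (hn : 2 ≤ n) (ε : ℝ) (hε : ε ∈ Set.Ioo (0 : ℝ) 1) :
    ∃ δ > (0 : ℝ), ∃ c > (0 : ℝ), ∀ k : ℕ, 1 ≤ k → k ≤ n →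
      ∀ f : Fin (k + 1) → DERData n,
        (∀ i : Fin (k + 1), 1 ≤ (i : ℕ) → (f 0).sprod (f i) < -ε) →
        (∀ i j : Fin (k + 1), 1 ≤ (i : ℕ) → 1 ≤ (j : ℕ) → i ≠ j → (f i).sprod (f j) < δ) →
        ∃ ξ : EuclideanSpace ℝ (Fin n), ‖ξ‖ = 1 ∧
          c < (f 1).toFun ξ ∧
          ∀ i : Fin (k + 1), 2 ≤ (i : ℕ) → (f i).toFun ξ = 0 := by
  obtain ⟨hε0, hε1⟩ := hε
  refine ⟨ε^4/2, by positivity, ε^2/20, by positivity, ?_⟩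
  intro k hk1 hkn f h1 h2
  classical
  have hval1 : ((1 : Fin (k+1)) : ℕ) = 1 := by
    rw [Fin.val_one']
    exact Nat.mod_eq_of_lt (by omega)
  have hinvε : 1 ≤ ε⁻¹ := by
    have h := mul_inv_cancel₀ hε0.ne'
    nlinarith [inv_pos.mpr hε0]
  -- the reference vector p from a selection of f 0
  obtain ⟨p, hpSel⟩ := DERAux.selSet_nonempty (f 0)
  have hpv : ∀ i : Fin (k+1), 1 ≤ (i:ℕ) → ∀ v ∈ DERAux.selSet (f i), ⟪v, p⟫_ℝ < -ε := by
    intro i hi v hv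
    have h3 : ⟪p, v⟫_ℝ ≤ (f 0).sprod (f i) := DERAux.inner_le_sprod hpSel hv
    have h4 := h1 i hi
    rw [real_inner_comm]
    linarith
  have hpn1 : ‖p‖ ≤ 1 := DERAux.selSet_norm_le (f 0) hpSel
  obtain ⟨v1, hv1⟩ := DERAux.selSet_nonempty (f 1)
  have hεp : ε < ‖p‖ := by
    have h := hpv 1 (by rw [hval1]) v1 hv1
    have habs := abs_real_inner_le_norm v1 p
    have hv1n : ‖v1‖ ≤ 1 := DERAux.selSet_norm_le (f 1) hv1
    nlinarith [neg_le_abs ⟪v1, p⟫_ℝ, norm_nonneg p, abs_nonneg ⟪v1, p⟫_ℝ]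
  have hp0 : 0 < ‖p‖ := lt_trans hε0 hεp
  obtain ⟨phat, hphatdef⟩ : ∃ y : EuclideanSpace ℝ (Fin n), y = ‖p‖⁻¹ • p := ⟨_, rfl⟩
  have hphat : ‖phat‖ = 1 := by
    rw [hphatdef, norm_smul, Real.norm_eq_abs, abs_inv, abs_of_pos hp0,
      inv_mul_cancel₀ hp0.ne']
  have hpp : ⟪phat, phat⟫_ℝ = 1 := by
    rw [real_inner_self_eq_norm_mul_norm, hphat]; norm_num
  obtain ⟨aa, haadef⟩ : ∃ F : EuclideanSpace ℝ (Fin n) → ℝ,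
      F = fun v => -⟪v, phat⟫_ℝ := ⟨_, rfl⟩
  have hainner : ∀ v, ⟪v, phat⟫_ℝ = -aa v := fun v => by rw [haadef]; ring
  have haε : ∀ i : Fin (k+1), 1 ≤ (i:ℕ) → ∀ v ∈ DERAux.selSet (f i),
      ε ≤ aa v ∧ aa v ≤ 1 := by
    intro i hi v hv
    have h := hpv i hi v hv
    have hvn : ‖v‖ ≤ 1 := DERAux.selSet_norm_le _ hv
    have hsm : ⟪v, phat⟫_ℝ = ‖p‖⁻¹ * ⟪v, p⟫_ℝ := by
      rw [hphatdef, real_inner_smul_right]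
    have hinv1 : 1 ≤ ‖p‖⁻¹ := by
      have hc := mul_inv_cancel₀ hp0.ne'
      nlinarith [inv_pos.mpr hp0]
    constructor
    · rw [haadef]
      simp only [hsm]
      have hmm : 1 * ε ≤ ‖p‖⁻¹ * (-⟪v, p⟫_ℝ) :=
        mul_le_mul hinv1 (by linarith) hε0.le (by positivity)
      nlinarith
    · rw [haadef]
      simp only []
      nlinarith [abs_real_inner_le_norm v phat, neg_le_abs ⟪v, phat⟫_ℝ, hphat]
  obtain ⟨M, hMdef⟩ : ∃ M : ℝ, M = 2 * ε⁻¹ := ⟨_, rfl⟩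
  have hM1 : 1 ≤ M := by rw [hMdef]; nlinarith
  obtain ⟨uu, huudef⟩ : ∃ F : EuclideanSpace ℝ (Fin n) → EuclideanSpace ℝ (Fin n),
      F = fun v => phat + (aa v)⁻¹ • v := ⟨_, rfl⟩
  have huuapp : ∀ v, uu v = phat + (aa v)⁻¹ • v := fun v => by rw [huudef]
  have huu_inner_phat : ∀ i : Fin (k+1), 1 ≤ (i:ℕ) → ∀ v ∈ DERAux.selSet (f i),
      ⟪uu v, phat⟫_ℝ = 0 := by
    intro i hi v hv
    have ha0 : (0:ℝ) < aa v := lt_of_lt_of_le hε0 (haε i hi v hv).1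
    rw [huuapp, inner_add_left, real_inner_smul_left, hpp, hainner v]
    field_simp
    ring
  have huu_norm : ∀ i : Fin (k+1), 1 ≤ (i:ℕ) → ∀ v ∈ DERAux.selSet (f i), ‖uu v‖ ≤ M := by
    intro i hi v hv
    have ha := (haε i hi v hv).1
    have ha0 : (0:ℝ) < aa v := lt_of_lt_of_le hε0 ha
    have hvn : ‖v‖ ≤ 1 := DERAux.selSet_norm_le _ hv
    have hinv : (aa v)⁻¹ ≤ ε⁻¹ := inv_anti₀ hε0 ha
    calc ‖uu v‖ ≤ ‖phat‖ + ‖(aa v)⁻¹ • v‖ := by rw [huuapp]; exact norm_add_le _ _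
    _ = 1 + (aa v)⁻¹ * ‖v‖ := by
        rw [hphat, norm_smul, Real.norm_eq_abs, abs_of_pos (inv_pos.mpr ha0)]
    _ ≤ 1 + ε⁻¹ * 1 := by
        have := mul_le_mul hinv hvn (norm_nonneg v) (le_of_lt (inv_pos.mpr hε0))
        linarith
    _ ≤ M := by rw [hMdef]; nlinarith
  have huu_cross : ∀ i j : Fin (k+1), 1 ≤ (i:ℕ) → 1 ≤ (j:ℕ) → i ≠ j →
      ∀ v ∈ DERAux.selSet (f i), ∀ w ∈ DERAux.selSet (f j),
        ⟪uu v, uu w⟫_ℝ ≤ -(1/2) := by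
    intro i j hi hj hij v hv w hw
    have hvw : ⟪v, w⟫_ℝ < ε^4/2 :=
      lt_of_le_of_lt (DERAux.inner_le_sprod hv hw) (h2 i j hi hj hij)
    have hav := haε i hi v hv
    have haw := haε j hj w hw
    have hav0 : (0:ℝ) < aa v := lt_of_lt_of_le hε0 hav.1
    have haw0 : (0:ℝ) < aa w := lt_of_lt_of_le hε0 haw.1
    have hpw : ⟪phat, w⟫_ℝ = -aa w := by rw [real_inner_comm]; exact hainner w
    have hexp : ⟪uu v, uu w⟫_ℝ = -1 + ⟪v, w⟫_ℝ * ((aa v)⁻¹ * (aa w)⁻¹) := by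
      rw [huuapp, huuapp]
      simp only [inner_add_left, inner_add_right, real_inner_smul_left,
        real_inner_smul_right, hpp, hpw, hainner v]
      field_simp
      ring
    rw [hexp]
    have hεε : ε * ε ≤ aa v * aa w :=
      mul_le_mul hav.1 haw.1 hε0.le (le_trans hε0.le hav.1)
    have hkey : ⟪v, w⟫_ℝ * ((aa v)⁻¹ * (aa w)⁻¹) ≤ 1/2 := by
      rw [← mul_inv, ← div_eq_mul_inv, div_le_iff₀ (by positivity)]
      have h1 : ε * ε ≤ 1 := by nlinarith
      have h2' : ε^4 ≤ ε * ε := by nlinarith [mul_pos hε0 hε0]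
      linarith
    linarith
  -- apply the core lemma
  obtain ⟨η, hη8, hleU, hact, h0U⟩ := DERAux.core M hM1
    (fun i : {i : Fin (k+1) // 2 ≤ (i:ℕ)} => uu '' DERAux.selSet (f i.1))
    (uu '' DERAux.selSet (f 1))
    (fun i => (DERAux.selSet_nonempty (f i.1)).image _)
    (fun i => by
      refine (DERAux.selSet_isCompact (f i.1)).image_of_continuousOn ?_
      rw [huudef, haadef]
      refine continuousOn_const.add (ContinuousOn.fun_smul ?_ continuousOn_id)
      refine ContinuousOn.inv₀ ?_ ?_
      · exact ((continuous_id.inner continuous_const).neg).continuousOn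
      · intro v hv
        have h2i := i.2
        have := (haε i.1 (by omega) v hv).1
        have hgt : (0:ℝ) < aa v := lt_of_lt_of_le hε0 this
        rw [haadef] at hgt
        exact hgt.ne')
    ((DERAux.selSet_nonempty (f 1)).image _)
    (fun i => by
      rintro _ ⟨v, hv, rfl⟩
      have h2i := i.2
      exact huu_norm i.1 (by omega) v hv)
    (by
      rintro _ ⟨v, hv, rfl⟩
      exact huu_norm 1 (by rw [hval1]) v hv)
    (fun i j hij => by
      rintro _ ⟨v, hv, rfl⟩ _ ⟨w, hw, rfl⟩
      have h2i := i.2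
      have h2j := j.2
      exact huu_cross i.1 j.1 (by omega) (by omega)
        (fun h => hij (Subtype.ext h)) v hv w hw)
    (fun i => by
      rintro _ ⟨v, hv, rfl⟩ _ ⟨w, hw, rfl⟩
      have h2i := i.2
      refine huu_cross i.1 1 (by omega) (by rw [hval1]) ?_ v hv w hw
      intro h
      rw [h, hval1] at h2i
      omega)
  -- project η orthogonally to phat
  obtain ⟨cc, hccdef⟩ : ∃ c : ℝ, c = ⟪phat, η⟫_ℝ := ⟨_, rfl⟩
  obtain ⟨ηt, hηtdef⟩ : ∃ y : EuclideanSpace ℝ (Fin n), y = η - cc • phat := ⟨_, rfl⟩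
  have hηtp : ⟪phat, ηt⟫_ℝ = 0 := by
    rw [hηtdef, inner_sub_right, real_inner_smul_right, hpp, hccdef]
    ring
  have hηtinner : ∀ x : EuclideanSpace ℝ (Fin n),
      ⟪x, phat⟫_ℝ = 0 → ⟪x, ηt⟫_ℝ = ⟪x, η⟫_ℝ := by
    intro x hx
    rw [hηtdef, inner_sub_right, real_inner_smul_right, hx]
    ring
  have hηtnorm : ‖ηt‖ ≤ ‖η‖ := by
    have h := norm_sub_sq_real η (cc • phat)
    rw [← hηtdef] at h
    have h2' : ⟪η, cc • phat⟫_ℝ = cc * cc := by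
      rw [real_inner_smul_right, real_inner_comm, ← hccdef]
    have h3 : ‖cc • phat‖^2 = cc^2 := by
      rw [norm_smul, hphat, Real.norm_eq_abs, mul_one, sq_abs]
    rw [h2', h3] at h
    nlinarith [norm_nonneg ηt, norm_nonneg η, sq_nonneg cc]
  obtain ⟨q, hqdef⟩ : ∃ y : EuclideanSpace ℝ (Fin n), y = phat + ηt := ⟨_, rfl⟩
  have hq2 : ‖q‖^2 = 1 + ‖ηt‖^2 := by
    rw [hqdef, norm_add_sq_real, hηtp, hphat]
    ring
  have hq1 : 1 ≤ ‖q‖ := by nlinarith [norm_nonneg q, sq_nonneg ‖ηt‖]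
  have hq0 : 0 < ‖q‖ := lt_of_lt_of_le one_pos hq1
  have h8 : ‖ηt‖ ≤ 8 * ε⁻¹ := by
    refine le_trans hηtnorm (le_trans hη8 ?_)
    rw [hMdef]; ring_nf; rfl
  have hqM : ‖q‖ ≤ 9 * ε⁻¹ := by
    by_contra hcon
    push_neg at hcon
    have hb : ε * ε⁻¹ = 1 := mul_inv_cancel₀ hε0.ne'
    have hbpos : (0:ℝ) < ε⁻¹ := inv_pos.mpr hε0
    have hq2' : ‖q‖^2 ≤ 1 + (8*ε⁻¹)^2 := by
      rw [hq2]
      nlinarith [norm_nonneg ηt]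
    nlinarith [mul_lt_mul_of_pos_left hcon (lt_of_lt_of_le zero_lt_one hq1),
      mul_pos hbpos hbpos]
  obtain ⟨ξ, hξdef⟩ : ∃ y : EuclideanSpace ℝ (Fin n), y = ‖q‖⁻¹ • q := ⟨_, rfl⟩
  have hξnorm : ‖ξ‖ = 1 := by
    rw [hξdef, norm_smul, Real.norm_eq_abs, abs_inv, abs_of_pos hq0,
      inv_mul_cancel₀ hq0.ne']
  have hinvq : ε/9 ≤ ‖q‖⁻¹ := by
    have hc := mul_inv_cancel₀ hq0.ne'
    have hbpos : (0:ℝ) < ‖q‖⁻¹ := inv_pos.mpr hq0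
    have h9 : ‖q‖ * (ε/9) ≤ 1 := by
      have := mul_le_mul_of_nonneg_right hqM (by positivity : (0:ℝ) ≤ ε/9)
      have hb : ε * ε⁻¹ = 1 := mul_inv_cancel₀ hε0.ne'
      nlinarith
    nlinarith
  have hvq : ∀ i : Fin (k+1), 1 ≤ (i:ℕ) → ∀ v ∈ DERAux.selSet (f i),
      ⟪v, q⟫_ℝ = aa v * (⟪uu v, η⟫_ℝ - 1) := by
    intro i hi v hv
    have ha := (haε i hi v hv).1
    have ha0 : (0:ℝ) < aa v := lt_of_lt_of_le hε0 ha
    have hA : ⟪uu v, ηt⟫_ℝ = ⟪uu v, η⟫_ℝ := hηtinner _ (huu_inner_phat i hi v hv)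
    have hB : ⟪uu v, ηt⟫_ℝ = (aa v)⁻¹ * ⟪v, ηt⟫_ℝ := by
      rw [huuapp, inner_add_left, real_inner_smul_left, hηtp]
      ring
    have hC : ⟪v, ηt⟫_ℝ = aa v * ⟪uu v, η⟫_ℝ := by
      rw [← hA, hB]
      field_simp
    rw [hqdef, inner_add_right, hC, hainner v]
    ring
  refine ⟨ξ, hξnorm, ?_, ?_⟩
  · -- the value of f 1
    obtain ⟨vm, hvmSel, hEq, hMax⟩ := DERAux.toFun_max (f 1) ξ
    have hone : 1 ≤ ((1 : Fin (k+1)) : ℕ) := by rw [hval1]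
    have h12 : ⟪uu vm, η⟫_ℝ ≤ 1/2 := h0U (uu vm) (Set.mem_image_of_mem _ hvmSel)
    have ha := haε 1 hone vm hvmSel
    have hqv := hvq 1 hone vm hvmSel
    have hvmq : ⟪vm, q⟫_ℝ ≤ -(ε/2) := by
      have hstep : aa vm * (⟪uu vm, η⟫_ℝ - 1) ≤ aa vm * (-(1/2)) :=
        mul_le_mul_of_nonneg_left (by linarith) (by linarith [ha.1, hε0])
      rw [hqv]
      linarith [ha.1]
    have hvmξ : ⟪vm, ξ⟫_ℝ ≤ -(ε^2/18) := by
      rw [hξdef, real_inner_smul_right]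
      have hA : ‖q‖⁻¹ * ⟪vm, q⟫_ℝ ≤ ‖q‖⁻¹ * (-(ε/2)) :=
        mul_le_mul_of_nonneg_left hvmq (inv_pos.mpr hq0).le
      have hB : ‖q‖⁻¹ * (-(ε/2)) ≤ (ε/9) * (-(ε/2)) := by
        nlinarith [mul_nonneg (sub_nonneg.2 hinvq) (by positivity : (0:ℝ) ≤ ε/2)]
      nlinarith
    have hEq' : -(f 1).toFun ξ = ⟪vm, ξ⟫_ℝ := hEq
    nlinarith [mul_pos hε0 hε0]
  · intro i hi2
    have hi1 : 1 ≤ (i:ℕ) := by omega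
    obtain ⟨vm, hvmSel, hEq, hMax⟩ := DERAux.toFun_max (f i) ξ
    have hle' : ⟪uu vm, η⟫_ℝ ≤ 1 :=
      hleU ⟨i, hi2⟩ (uu vm) (Set.mem_image_of_mem _ hvmSel)
    have h1' : ⟪vm, q⟫_ℝ ≤ 0 := by
      rw [hvq i hi1 vm hvmSel]
      have ha := (haε i hi1 vm hvmSel).1
      nlinarith
    have h2' : ⟪vm, ξ⟫_ℝ ≤ 0 := by
      rw [hξdef, real_inner_smul_right]
      nlinarith [inv_pos.mpr hq0]
    obtain ⟨u', hu'mem, hu'1⟩ := hact ⟨i, hi2⟩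
    obtain ⟨v0, hv0Sel, rfl⟩ := hu'mem
    have h3' : ⟪v0, q⟫_ℝ = 0 := by
      rw [hvq i hi1 v0 hv0Sel, hu'1]
      ring
    have h4' : ⟪v0, ξ⟫_ℝ = 0 := by
      rw [hξdef, real_inner_smul_right, h3']
      ring
    have h5' := hMax v0 hv0Sel
    have hEq' : -(f i).toFun ξ = ⟪vm, ξ⟫_ℝ := hEq
    linarith

end
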